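/- Let G be K_{4,4}^- or K_{4,4}, and let G_v be any graph obtained from G by applying operation O2 to some vertex of G. Then there exists a circle X of G_v such that the contraction G_v/X has a minor isomorphic to K_{3,3}. -/

import Mathlib

/-! Common definitions for formalizing "On the Interplay between Graphic and
Cographic Matroids with Graphic Cocircuits" (arXiv:0909.5033). -/

section MatroidDefs

variable {α β : Type*}

/-- Deletion of a set of elements from a matroid: `M \ D`. -/
def mDel (M : Matroid α) (D : Set α) : Matroid α := M.restrict (M.E \ D)

/-- Contraction of a set of elements in a matroid: `M / C = (M✶ \ C)✶`. -/
def mCon (M : Matroid α) (C : Set α) : Matroid α := (mDel M✶ C)✶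

/-- `MinorOf N M` means `N` can be obtained from `M` by a sequence of deletions
and contractions. -/
inductive MinorOf : Matroid α → Matroid α → Prop
  | refl (M : Matroid α) : MinorOf M M
  | del {N M : Matroid α} (D : Set α) : MinorOf N M → MinorOf (mDel N D) M
  | con {N M : Matroid α} (C : Set α) : MinorOf N M → MinorOf (mCon N C) M

/-- `C` is a circuit of the matroid `M`: a minimal dependent set. -/
def IsCircuitOf (M : Matroid α) (C : Set α) : Prop :=
  M.Dep C ∧ ∀ D, D ⊂ C → M.Indep D

/-- `C` is a cocircuit of `M`: a circuit of the dual matroid. -/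
def IsCocircuitOf (M : Matroid α) (C : Set α) : Prop := IsCircuitOf M✶ C

/-- Matroid isomorphism: a bijection between the ground sets preserving independence. -/
def MatroidIso (M : Matroid α) (N : Matroid β) : Prop :=
  ∃ f : α → β, Set.BijOn f M.E N.E ∧ ∀ I ⊆ M.E, (M.Indep I ↔ N.Indep (f '' I))

/-- `M` has a minor isomorphic to `N`. -/
def HasMinorIso (M : Matroid α) (N : Matroid β) : Prop :=
  ∃ M₀ : Matroid α, MinorOf M₀ M ∧ MatroidIso M₀ N

/-- A matroid is simple if it has no circuits of size one or two. -/
def IsSimpleMatroid (M : Matroid α) : Prop :=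
  ∀ C, IsCircuitOf M C → C.ncard ≠ 1 ∧ C.ncard ≠ 2

/-- A `k`-separation of a matroid (rank condition phrased via bases of the two sides,
which all have the same cardinality): `r(X) + r(Y) - r(M) ≤ k - 1`. -/
def MatroidKSeparation (M : Matroid α) (k : ℕ) : Prop :=
  ∃ X Y : Set α, X ∪ Y = M.E ∧ Disjoint X Y ∧ k ≤ X.ncard ∧ k ≤ Y.ncard ∧
    ∀ I J B, M.IsBasis I X → M.IsBasis J Y → M.IsBase B →
      I.ncard + J.ncard + 1 ≤ B.ncard + k

/-- A matroid is 3-connected if it has no 1-separation and no 2-separation. -/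
def MatroidThreeConnected (M : Matroid α) : Prop :=
  ¬ MatroidKSeparation M 1 ∧ ¬ MatroidKSeparation M 2

/-- Representability of a matroid over a field `F`. -/
def IsRepresentableOver (M : Matroid α) (F : Type) [Field F] : Prop :=
  ∃ (n : ℕ) (φ : α → (Fin n → F)), ∀ I, I ⊆ M.E →
    (M.Indep I ↔ LinearIndependent F (fun x : I => φ x))

/-- A matroid is regular if it is representable over every field. -/
def IsRegularMatroid (M : Matroid α) : Prop :=
  ∀ (F : Type) [Field F], IsRepresentableOver M F

end MatroidDefs

section GraphDefs

variable {V W : Type*}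

/-- A circle of a graph: the edge set of a cycle. -/
def IsGraphCircle (G : SimpleGraph V) (X : Set (Sym2 V)) : Prop :=
  ∃ (u : V) (c : G.Walk u u), c.IsCycle ∧ X = {e | e ∈ c.edges}

/-- The contraction `G/X` of a set of edges `X` in a graph `G`: vertices are the
connected components of the subgraph formed by the edges of `X`, and distinct
components are adjacent if `G` has an edge outside `X` joining them. -/
def contractGraph (G : SimpleGraph V) (X : Set (Sym2 V)) :
    SimpleGraph (SimpleGraph.fromEdgeSet X ⊓ G).ConnectedComponent :=
  SimpleGraph.fromRel fun a b => ∃ u v : V, G.Adj u v ∧ s(u, v) ∉ X ∧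
    a = (SimpleGraph.fromEdgeSet X ⊓ G).connectedComponentMk u ∧
    b = (SimpleGraph.fromEdgeSet X ⊓ G).connectedComponentMk v

/-- `G` has a minor isomorphic to `H` (branch-set/minor-model definition). -/
def HasGraphMinor (G : SimpleGraph V) (H : SimpleGraph W) : Prop :=
  ∃ φ : W → Set V,
    (∀ w, (φ w).Nonempty) ∧
    (∀ w, ((G.induce (φ w)).Connected)) ∧
    (Pairwise fun w₁ w₂ => Disjoint (φ w₁) (φ w₂)) ∧
    ∀ ⦃w₁ w₂⦄, H.Adj w₁ w₂ → ∃ v₁ ∈ φ w₁, ∃ v₂ ∈ φ w₂, G.Adj v₁ v₂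

/-- The degree of a vertex, as the cardinality of its neighbour set. -/
noncomputable def vDeg (G : SimpleGraph V) (v : V) : ℕ := (G.neighborSet v).ncard

/-- The set of end-vertices of a set of edges. -/
def edgeEndpoints (A : Set (Sym2 V)) : Set V := {v | ∃ e ∈ A, v ∈ e}

/-- A Tutte `k`-separation of a graph: a partition `(A, B)` of the edge set with
`min(|A|,|B|) ≥ k` and exactly `k` vertices in common between `G[A]` and `G[B]`. -/
def GraphKSeparation (G : SimpleGraph V) (k : ℕ) : Prop :=
  ∃ A B : Set (Sym2 V), A ∪ B = G.edgeSet ∧ Disjoint A B ∧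
    k ≤ A.ncard ∧ k ≤ B.ncard ∧ (edgeEndpoints A ∩ edgeEndpoints B).ncard = k

/-- Tutte 3-connectivity of a graph. -/
def GraphThreeConnected (G : SimpleGraph V) : Prop :=
  G.Connected ∧ ¬ GraphKSeparation G 1 ∧ ¬ GraphKSeparation G 2

/-- `M` is the cycle matroid of the graph `G`: the ground set is the edge set of `G`
and the circuits are exactly the circles (edge sets of cycles) of `G`. -/
def IsCycleMatroidOf (M : Matroid (Sym2 V)) (G : SimpleGraph V) : Prop :=
  M.E = G.edgeSet ∧ ∀ C, IsCircuitOf M C ↔ IsGraphCircle G C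

/-- A matroid is graphic if it is isomorphic to the cycle matroid of some graph. -/
def IsGraphicMatroid {α : Type*} (M : Matroid α) : Prop :=
  ∃ (V : Type) (G : SimpleGraph V) (N : Matroid (Sym2 V)),
    IsCycleMatroidOf N G ∧ MatroidIso M N

/-- A matroid is cographic if its dual is graphic. -/
def IsCographicMatroid {α : Type*} (M : Matroid α) : Prop := IsGraphicMatroid M✶

/-- Operation O2 data at a vertex `v`: a partition of the neighbours of `v`
(of degree at least 4) into two parts of size at least two each (so that both new
vertices have degree greater than 2). -/
def IsO2Partition (G : SimpleGraph V) (v : V) (S₁ S₂ : Set V) : Prop :=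
  4 ≤ (G.neighborSet v).ncard ∧ S₁ ∪ S₂ = G.neighborSet v ∧ Disjoint S₁ S₂ ∧
    2 ≤ S₁.ncard ∧ 2 ≤ S₂.ncard

/-- The graph obtained from `G` by operation O2 at `v`, with neighbour partition
`(S₁, S₂)` : the vertex `some v` plays the role of `v₁`, the new vertex `none`
plays the role of `v₂`, and `v₁`, `v₂` are adjacent. -/
def o2Graph (G : SimpleGraph V) (v : V) (S₁ S₂ : Set V) : SimpleGraph (Option V) :=
  SimpleGraph.fromRel fun a b =>
    (∃ u w, u ≠ v ∧ w ≠ v ∧ G.Adj u w ∧ a = some u ∧ b = some w) ∨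
    (∃ u, u ∈ S₁ ∧ a = some v ∧ b = some u) ∨
    (∃ u, u ∈ S₂ ∧ a = none ∧ b = some u) ∨
    (a = some v ∧ b = none)

end GraphDefs

section NamedGraphs

/-- The complete graph `K₅`. -/
def K5 : SimpleGraph (Fin 5) := SimpleGraph.completeGraph (Fin 5)

/-- The complete bipartite graph `K₃,₃`. -/
def K33 : SimpleGraph (Fin 3 ⊕ Fin 3) := completeBipartiteGraph (Fin 3) (Fin 3)

/-- The complete bipartite graph `K₃,₅`. -/
def K35 : SimpleGraph (Fin 3 ⊕ Fin 5) := completeBipartiteGraph (Fin 3) (Fin 5)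

/-- The complete bipartite graph `K₄,₄`. -/
def K44 : SimpleGraph (Fin 4 ⊕ Fin 4) := completeBipartiteGraph (Fin 4) (Fin 4)

/-- `K₄,₄` minus an edge. -/
def K44minus : SimpleGraph (Fin 4 ⊕ Fin 4) :=
  K44.deleteEdges {s(Sum.inl 0, Sum.inr 0)}

/-- The complete bipartite graph `K₃,ₙ`, with side `A` of size 3 and side `B` of size `n`. -/
def K3n (n : ℕ) : SimpleGraph (Fin 3 ⊕ Fin n) := completeBipartiteGraph (Fin 3) (Fin n)

/-- `K₃,ₙ` plus one edge inside the side `A`. -/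
def K3nPlus1 (n : ℕ) : SimpleGraph (Fin 3 ⊕ Fin n) :=
  K3n n ⊔ SimpleGraph.fromEdgeSet {s(Sum.inl 0, Sum.inl 1)}

/-- `K₃,ₙ` plus two edges inside the side `A`. -/
def K3nPlus2 (n : ℕ) : SimpleGraph (Fin 3 ⊕ Fin n) :=
  K3n n ⊔ SimpleGraph.fromEdgeSet {s(Sum.inl 0, Sum.inl 1), s(Sum.inl 0, Sum.inl 2)}

/-- `K₃,ₙ` plus all three edges inside the side `A`. -/
def K3nPlus3 (n : ℕ) : SimpleGraph (Fin 3 ⊕ Fin n) :=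
  K3n n ⊔ SimpleGraph.fromEdgeSet
    {s(Sum.inl 0, Sum.inl 1), s(Sum.inl 0, Sum.inl 2), s(Sum.inl 1, Sum.inl 2)}

/-- The family `{K₃,ₙ, K₃,ₙ⁺¹, K₃,ₙ⁺², K₃,ₙ⁺³}`. -/
def K3nFamily (n : ℕ) : Set (SimpleGraph (Fin 3 ⊕ Fin n)) :=
  {K3n n, K3nPlus1 n, K3nPlus2 n, K3nPlus3 n}

end NamedGraphs

section SignedGraphs

variable {V : Type*}

/-- The number of negative edges of a walk, for a sign function `σ`
(`σ e = false` meaning that `e` is negative). -/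
def negCount (σ : Sym2 V → Bool) {G : SimpleGraph V} {u v : V} (c : G.Walk u v) : ℕ :=
  (c.edges.filter fun e => !σ e).length

/-- Circuits of a signed graph `(G, σ)`: a positive cycle; or two negative cycles
meeting in exactly one vertex; or two vertex-disjoint negative cycles joined by a
path meeting the cycles only in its end vertices. -/
def IsSignedCircuit (G : SimpleGraph V) (σ : Sym2 V → Bool) (C : Set (Sym2 V)) : Prop :=
  (∃ (u : V) (c : G.Walk u u), c.IsCycle ∧ Even (negCount σ c) ∧
      C = {e | e ∈ c.edges}) ∨
  (∃ (w : V) (c₁ c₂ : G.Walk w w), c₁.IsCycle ∧ c₂.IsCycle ∧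
      Odd (negCount σ c₁) ∧ Odd (negCount σ c₂) ∧
      {x | x ∈ c₁.support} ∩ {x | x ∈ c₂.support} = {w} ∧
      C = {e | e ∈ c₁.edges} ∪ {e | e ∈ c₂.edges}) ∨
  (∃ (u v : V) (c₁ : G.Walk u u) (c₂ : G.Walk v v) (p : G.Walk u v),
      c₁.IsCycle ∧ c₂.IsCycle ∧ p.IsPath ∧
      Odd (negCount σ c₁) ∧ Odd (negCount σ c₂) ∧
      {x | x ∈ c₁.support} ∩ {x | x ∈ c₂.support} = ∅ ∧
      {x | x ∈ p.support} ∩ {x | x ∈ c₁.support} = {u} ∧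
      {x | x ∈ p.support} ∩ {x | x ∈ c₂.support} = {v} ∧
      C = {e | e ∈ c₁.edges} ∪ {e | e ∈ c₂.edges} ∪ {e | e ∈ p.edges})

/-- `M` is the signed-graphic matroid of the signed graph `(G, σ)`. -/
def IsSignedGraphicMatroidOf (M : Matroid (Sym2 V)) (G : SimpleGraph V)
    (σ : Sym2 V → Bool) : Prop :=
  M.E = G.edgeSet ∧ ∀ C, IsCircuitOf M C ↔ IsSignedCircuit G σ C

/-- A matroid is signed-graphic if it is isomorphic to the matroid of some signed graph. -/
def IsSignedGraphicMatroid {α : Type*} (M : Matroid α) : Prop :=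
  ∃ (V : Type) (G : SimpleGraph V) (σ : Sym2 V → Bool) (N : Matroid (Sym2 V)),
    IsSignedGraphicMatroidOf N G σ ∧ MatroidIso M N

end SignedGraphs


section KeyLemma

open SimpleGraph

variable {W : Type} [DecidableEq W]

private lemma induce_singleton_connected (G : SimpleGraph W) (x : W) :
    (G.induce {x}).Connected := by
  have hne : Nonempty ({x} : Set W) := ⟨⟨x, rfl⟩⟩
  refine SimpleGraph.Connected.mk ?_
  rintro ⟨u, hu⟩ ⟨w, hw⟩
  simp only [Set.mem_singleton_iff] at hu hw
  subst hu; subst hw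
  exact Reachable.refl _

private lemma key (H : SimpleGraph W) (a b c d p q t r s : W)
    (hab : H.Adj a b) (hbc : H.Adj b c) (hcd : H.Adj c d) (hda : H.Adj d a)
    (hac : a ≠ c) (hbd : b ≠ d)
    (hpo : p ≠ a ∧ p ≠ b ∧ p ≠ c ∧ p ≠ d)
    (hqo : q ≠ a ∧ q ≠ b ∧ q ≠ c ∧ q ≠ d)
    (hto : t ≠ a ∧ t ≠ b ∧ t ≠ c ∧ t ≠ d)
    (hro : r ≠ a ∧ r ≠ b ∧ r ≠ c ∧ r ≠ d)
    (hso : s ≠ a ∧ s ≠ b ∧ s ≠ c ∧ s ≠ d)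
    (hpq : p ≠ q) (hpt : p ≠ t) (hqt : q ≠ t) (hrs : r ≠ s)
    (hApr : H.Adj p r) (hAps : H.Adj p s) (hAqr : H.Adj q r) (hAqs : H.Adj q s)
    (hAtr : H.Adj t r) (hAts : H.Adj t s)
    (hpC : ∃ z, (z = a ∨ z = b ∨ z = c ∨ z = d) ∧ H.Adj p z)
    (hqC : ∃ z, (z = a ∨ z = b ∨ z = c ∨ z = d) ∧ H.Adj q z)
    (htC : ∃ z, (z = a ∨ z = b ∨ z = c ∨ z = d) ∧ H.Adj t z) :
    ∃ X : Set (Sym2 W),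
      IsGraphCircle H X ∧ HasGraphMinor (contractGraph H X) K33 := by
  classical
  refine ⟨{s(a,b), s(b,c), s(c,d), s(d,a)}, ?_, ?_⟩
  · -- cycle
    refine ⟨a, .cons hab (.cons hbc (.cons hcd (.cons hda .nil))), ?_, ?_⟩
    · rw [SimpleGraph.Walk.isCycle_def]
      refine ⟨?_, by simp, ?_⟩
      · rw [SimpleGraph.Walk.isTrail_def]
        simp [Sym2.eq_iff, hab.ne, hbc.ne, hcd.ne, hda.ne, hac, hbd,
          hab.ne', hbc.ne', hcd.ne', hda.ne', hac.symm, hbd.symm, hda.ne]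
      · simp [hab.ne', hbc.ne, hcd.ne, hda.ne', hac, hbd, hac.symm, hda.ne]
    · ext e
      simp only [SimpleGraph.Walk.edges_cons, SimpleGraph.Walk.edges_nil,
        List.mem_cons, List.not_mem_nil, or_false, Set.mem_setOf_eq,
        Set.mem_insert_iff, Set.mem_singleton_iff]
  · -- minor
    set X : Set (Sym2 W) := {s(a,b), s(b,c), s(c,d), s(d,a)} with hX
    set H' := SimpleGraph.fromEdgeSet X ⊓ H with hH'
    have hXmem : ∀ e, e ∈ X ↔
        (e = s(a,b) ∨ e = s(b,c) ∨ e = s(c,d) ∨ e = s(d,a)) := by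
      intro e; simp [hX]
    have hnotX : ∀ u z : W, u ≠ a → u ≠ b → u ≠ c → u ≠ d → s(u,z) ∉ X := by
      intro u z h1 h2 h3 h4 hmem
      rcases (hXmem _).1 hmem with h|h|h|h <;>
        rcases Sym2.eq_iff.1 h with ⟨h5, -⟩|⟨h5, -⟩ <;>
        first | exact h1 h5 | exact h2 h5 | exact h3 h5 | exact h4 h5
    have hisol : ∀ u : W, u ≠ a → u ≠ b → u ≠ c → u ≠ d → ∀ z, ¬ H'.Adj u z := by
      intro u h1 h2 h3 h4 z hadj
      rw [hH', SimpleGraph.inf_adj, SimpleGraph.fromEdgeSet_adj] at hadj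
      exact hnotX u z h1 h2 h3 h4 hadj.1.1
    have hreach : ∀ u : W, (∀ z, ¬ H'.Adj u z) → ∀ z, H'.Reachable u z → u = z := by
      intro u hu z hz
      obtain ⟨wlk⟩ := hz
      cases wlk with
      | nil => rfl
      | cons h _ => exact absurd h (hu _)
    have hmkeq : ∀ u : W, u ≠ a → u ≠ b → u ≠ c → u ≠ d →
        ∀ z, H'.connectedComponentMk u = H'.connectedComponentMk z → u = z := by
      intro u h1 h2 h3 h4 z hz
      exact hreach u (hisol u h1 h2 h3 h4) z (SimpleGraph.ConnectedComponent.eq.1 hz)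
    have hadjH' : ∀ u z : W, H.Adj u z → s(u,z) ∈ X → H'.Adj u z := by
      intro u z h1 h2
      rw [hH', SimpleGraph.inf_adj, SimpleGraph.fromEdgeSet_adj]
      exact ⟨⟨h2, h1.ne⟩, h1⟩
    set Cp := H'.connectedComponentMk p with hCp
    set Cq := H'.connectedComponentMk q with hCq
    set Ct := H'.connectedComponentMk t with hCt
    set Cr := H'.connectedComponentMk r with hCr
    set Cs := H'.connectedComponentMk s with hCs
    set Ca := H'.connectedComponentMk a with hCa
    have hmkz : ∀ z : W, (z = a ∨ z = b ∨ z = c ∨ z = d) →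
        H'.connectedComponentMk z = Ca := by
      intro z hz
      have eab : H'.Adj a b := hadjH' a b hab ((hXmem _).2 (Or.inl rfl))
      have ebc : H'.Adj b c := hadjH' b c hbc ((hXmem _).2 (Or.inr (Or.inl rfl)))
      have eda : H'.Adj d a := hadjH' d a hda ((hXmem _).2 (Or.inr (Or.inr (Or.inr rfl))))
      rcases hz with hz|hz|hz|hz <;> rw [hz]
      · exact SimpleGraph.ConnectedComponent.eq.2
          ⟨SimpleGraph.Walk.cons eab.symm (SimpleGraph.Walk.nil' a)⟩
      · exact SimpleGraph.ConnectedComponent.eq.2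
          ⟨SimpleGraph.Walk.cons ebc.symm
            (SimpleGraph.Walk.cons eab.symm (SimpleGraph.Walk.nil' a))⟩
      · exact SimpleGraph.ConnectedComponent.eq.2
          ⟨SimpleGraph.Walk.cons eda (SimpleGraph.Walk.nil' a)⟩
    -- distinctness of components
    have hne : ∀ u z : W, u ≠ a → u ≠ b → u ≠ c → u ≠ d → u ≠ z →
        H'.connectedComponentMk u ≠ H'.connectedComponentMk z := by
      intro u z h1 h2 h3 h4 h5 h
      exact h5 (hmkeq u h1 h2 h3 h4 z h)
    obtain ⟨hp1, hp2, hp3, hp4⟩ := hpo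
    obtain ⟨hq1, hq2, hq3, hq4⟩ := hqo
    obtain ⟨ht1, ht2, ht3, ht4⟩ := hto
    obtain ⟨hr1, hr2, hr3, hr4⟩ := hro
    obtain ⟨hs1, hs2, hs3, hs4⟩ := hso
    have hCpq : Cp ≠ Cq := hne p q hp1 hp2 hp3 hp4 hpq
    have hCpt : Cp ≠ Ct := hne p t hp1 hp2 hp3 hp4 hpt
    have hCqt : Cq ≠ Ct := hne q t hq1 hq2 hq3 hq4 hqt
    have hCrs : Cr ≠ Cs := hne r s hr1 hr2 hr3 hr4 hrs
    have hCpr : Cp ≠ Cr := hne p r hp1 hp2 hp3 hp4 hApr.ne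
    have hCps : Cp ≠ Cs := hne p s hp1 hp2 hp3 hp4 hAps.ne
    have hCqr : Cq ≠ Cr := hne q r hq1 hq2 hq3 hq4 hAqr.ne
    have hCqs : Cq ≠ Cs := hne q s hq1 hq2 hq3 hq4 hAqs.ne
    have hCtr : Ct ≠ Cr := hne t r ht1 ht2 ht3 ht4 hAtr.ne
    have hCts : Ct ≠ Cs := hne t s ht1 ht2 ht3 ht4 hAts.ne
    have hCpa : Cp ≠ Ca := hne p a hp1 hp2 hp3 hp4 hp1
    have hCqa : Cq ≠ Ca := hne q a hq1 hq2 hq3 hq4 hq1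
    have hCta : Ct ≠ Ca := hne t a ht1 ht2 ht3 ht4 ht1
    have hCra : Cr ≠ Ca := hne r a hr1 hr2 hr3 hr4 hr1
    have hCsa : Cs ≠ Ca := hne s a hs1 hs2 hs3 hs4 hs1
    -- contracted-graph adjacencies
    have hCadj : ∀ u z : W, H.Adj u z → u ≠ a → u ≠ b → u ≠ c → u ≠ d →
        H'.connectedComponentMk u ≠ H'.connectedComponentMk z →
        (contractGraph H X).Adj (H'.connectedComponentMk u)
          (H'.connectedComponentMk z) := by
      intro u z h0 h1 h2 h3 h4 h5
      rw [contractGraph, SimpleGraph.fromRel_adj]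
      exact ⟨h5, Or.inl ⟨u, z, h0, hnotX u z h1 h2 h3 h4, rfl, rfl⟩⟩
    have hPR : (contractGraph H X).Adj Cp Cr := hCadj p r hApr hp1 hp2 hp3 hp4 hCpr
    have hPS : (contractGraph H X).Adj Cp Cs := hCadj p s hAps hp1 hp2 hp3 hp4 hCps
    have hQR : (contractGraph H X).Adj Cq Cr := hCadj q r hAqr hq1 hq2 hq3 hq4 hCqr
    have hQS : (contractGraph H X).Adj Cq Cs := hCadj q s hAqs hq1 hq2 hq3 hq4 hCqs
    have hTR : (contractGraph H X).Adj Ct Cr := hCadj t r hAtr ht1 ht2 ht3 ht4 hCtr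
    have hTS : (contractGraph H X).Adj Ct Cs := hCadj t s hAts ht1 ht2 ht3 ht4 hCts
    have hCadjA : ∀ (u : W), u ≠ a → u ≠ b → u ≠ c → u ≠ d →
        (∃ z, (z = a ∨ z = b ∨ z = c ∨ z = d) ∧ H.Adj u z) →
        H'.connectedComponentMk u ≠ Ca →
        (contractGraph H X).Adj (H'.connectedComponentMk u) Ca := by
      rintro u h1 h2 h3 h4 ⟨z, hz1, hz2⟩ h5
      rw [contractGraph, SimpleGraph.fromRel_adj]
      exact ⟨h5, Or.inl ⟨u, z, hz2, hnotX u z h1 h2 h3 h4, rfl, (hmkz z hz1).symm⟩⟩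
    have hPA : (contractGraph H X).Adj Cp Ca := hCadjA p hp1 hp2 hp3 hp4 hpC hCpa
    have hQA : (contractGraph H X).Adj Cq Ca := hCadjA q hq1 hq2 hq3 hq4 hqC hCqa
    have hTA : (contractGraph H X).Adj Ct Ca := hCadjA t ht1 ht2 ht3 ht4 htC hCta
    -- assemble the minor
    refine ⟨fun w => Sum.elim (![{Cp}, {Cq}, {Ct}]) (![{Cr}, {Cs}, {Ca}]) w,
      ?_, ?_, ?_, ?_⟩
    · rintro (i|i) <;> fin_cases i <;> exact Set.singleton_nonempty _
    · rintro (i|i) <;> fin_cases i <;> exact induce_singleton_connected _ _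
    · rintro (i|i) (j|j) hwne <;> fin_cases i <;> fin_cases j <;>
        first
          | exact absurd rfl hwne
          | exact Set.disjoint_singleton.2 hCpq
          | exact Set.disjoint_singleton.2 hCpq.symm
          | exact Set.disjoint_singleton.2 hCpt
          | exact Set.disjoint_singleton.2 hCpt.symm
          | exact Set.disjoint_singleton.2 hCqt
          | exact Set.disjoint_singleton.2 hCqt.symm
          | exact Set.disjoint_singleton.2 hCrs
          | exact Set.disjoint_singleton.2 hCrs.symm
          | exact Set.disjoint_singleton.2 hCpr
          | exact Set.disjoint_singleton.2 hCpr.symm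
          | exact Set.disjoint_singleton.2 hCps
          | exact Set.disjoint_singleton.2 hCps.symm
          | exact Set.disjoint_singleton.2 hCqr
          | exact Set.disjoint_singleton.2 hCqr.symm
          | exact Set.disjoint_singleton.2 hCqs
          | exact Set.disjoint_singleton.2 hCqs.symm
          | exact Set.disjoint_singleton.2 hCtr
          | exact Set.disjoint_singleton.2 hCtr.symm
          | exact Set.disjoint_singleton.2 hCts
          | exact Set.disjoint_singleton.2 hCts.symm
          | exact Set.disjoint_singleton.2 hCpa
          | exact Set.disjoint_singleton.2 hCpa.symm
          | exact Set.disjoint_singleton.2 hCqa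
          | exact Set.disjoint_singleton.2 hCqa.symm
          | exact Set.disjoint_singleton.2 hCta
          | exact Set.disjoint_singleton.2 hCta.symm
          | exact Set.disjoint_singleton.2 hCra
          | exact Set.disjoint_singleton.2 hCra.symm
          | exact Set.disjoint_singleton.2 hCsa
          | exact Set.disjoint_singleton.2 hCsa.symm
    · rintro (i|i) (j|j) hwadj
      · exact absurd hwadj (by simp [K33])
      · fin_cases i <;> fin_cases j <;>
          first
            | exact ⟨Cp, rfl, Cr, rfl, hPR⟩
            | exact ⟨Cp, rfl, Cs, rfl, hPS⟩
            | exact ⟨Cp, rfl, Ca, rfl, hPA⟩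
            | exact ⟨Cq, rfl, Cr, rfl, hQR⟩
            | exact ⟨Cq, rfl, Cs, rfl, hQS⟩
            | exact ⟨Cq, rfl, Ca, rfl, hQA⟩
            | exact ⟨Ct, rfl, Cr, rfl, hTR⟩
            | exact ⟨Ct, rfl, Cs, rfl, hTS⟩
            | exact ⟨Ct, rfl, Ca, rfl, hTA⟩
      · fin_cases i <;> fin_cases j <;>
          first
            | exact ⟨Cr, rfl, Cp, rfl, hPR.symm⟩
            | exact ⟨Cs, rfl, Cp, rfl, hPS.symm⟩
            | exact ⟨Ca, rfl, Cp, rfl, hPA.symm⟩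
            | exact ⟨Cr, rfl, Cq, rfl, hQR.symm⟩
            | exact ⟨Cs, rfl, Cq, rfl, hQS.symm⟩
            | exact ⟨Ca, rfl, Cq, rfl, hQA.symm⟩
            | exact ⟨Cr, rfl, Ct, rfl, hTR.symm⟩
            | exact ⟨Cs, rfl, Ct, rfl, hTS.symm⟩
            | exact ⟨Ca, rfl, Ct, rfl, hTA.symm⟩
      · exact absurd hwadj (by simp [K33])

end KeyLemma


section MainAux

open SimpleGraph

variable {G : SimpleGraph (Fin 4 ⊕ Fin 4)} {v : Fin 4 ⊕ Fin 4}
  {S₁ S₂ : Set (Fin 4 ⊕ Fin 4)}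

private lemma o2_adj_S1 {u : Fin 4 ⊕ Fin 4} (hu : u ∈ S₁) (hne : u ≠ v) :
    (o2Graph G v S₁ S₂).Adj (some v) (some u) := by
  rw [o2Graph, SimpleGraph.fromRel_adj]
  exact ⟨by simp [Ne.symm hne], Or.inl (Or.inr (Or.inl ⟨u, hu, rfl, rfl⟩))⟩

private lemma o2_adj_S2 {u : Fin 4 ⊕ Fin 4} (hu : u ∈ S₂) :
    (o2Graph G v S₁ S₂).Adj none (some u) := by
  rw [o2Graph, SimpleGraph.fromRel_adj]
  exact ⟨by simp, Or.inl (Or.inr (Or.inr (Or.inl ⟨u, hu, rfl, rfl⟩)))⟩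

private lemma o2_adj_vv : (o2Graph G v S₁ S₂).Adj (some v) none := by
  rw [o2Graph, SimpleGraph.fromRel_adj]
  exact ⟨by simp, Or.inl (Or.inr (Or.inr (Or.inr ⟨rfl, rfl⟩)))⟩

private lemma o2_adj_orig {u w : Fin 4 ⊕ Fin 4} (hu : u ≠ v) (hw : w ≠ v)
    (h : G.Adj u w) : (o2Graph G v S₁ S₂).Adj (some u) (some w) := by
  rw [o2Graph, SimpleGraph.fromRel_adj]
  exact ⟨by simp [h.ne], Or.inl (Or.inl ⟨u, w, hu, hw, h, rfl, rfl⟩)⟩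

private lemma main_aux (y y' r0 s0 x1 x2 x3 : Fin 4 ⊕ Fin 4)
    (hy : y ∈ S₁) (hy' : y' ∈ S₁) (hr : r0 ∈ S₂) (hs : s0 ∈ S₂)
    (hS1 : S₁ ⊆ G.neighborSet v) (hS2 : S₂ ⊆ G.neighborSet v)
    (hd : Disjoint S₁ S₂)
    (hyy' : y ≠ y') (hrs : r0 ≠ s0)
    (hx1v : x1 ≠ v) (hx2v : x2 ≠ v) (hx3v : x3 ≠ v)
    (hx12 : x1 ≠ x2) (hx13 : x1 ≠ x3) (hx23 : x2 ≠ x3)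
    (hx1y : x1 ≠ y) (hx1y' : x1 ≠ y') (hx2y : x2 ≠ y) (hx2y' : x2 ≠ y')
    (hx3y : x3 ≠ y) (hx3y' : x3 ≠ y') (hx1r : x1 ≠ r0) (hx1s : x1 ≠ s0)
    (hxy : G.Adj x1 y) (hxy' : G.Adj x1 y')
    (h2r : G.Adj x2 r0) (h2s : G.Adj x2 s0) (h3r : G.Adj x3 r0) (h3s : G.Adj x3 s0)
    (h2C : G.Adj x2 y ∨ G.Adj x2 y') (h3C : G.Adj x3 y ∨ G.Adj x3 y') :
    ∃ X : Set (Sym2 (Option (Fin 4 ⊕ Fin 4))),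
      IsGraphCircle (o2Graph G v S₁ S₂) X ∧
      HasGraphMinor (contractGraph (o2Graph G v S₁ S₂) X) K33 := by
  have hyv : y ≠ v := (G.ne_of_adj (hS1 hy)).symm
  have hy'v : y' ≠ v := (G.ne_of_adj (hS1 hy')).symm
  have hrv : r0 ≠ v := (G.ne_of_adj (hS2 hr)).symm
  have hsv : s0 ≠ v := (G.ne_of_adj (hS2 hs)).symm
  have hry : r0 ≠ y := fun h => (hd.ne_of_mem hy hr) (h.symm)
  have hry' : r0 ≠ y' := fun h => (hd.ne_of_mem hy' hr) (h.symm)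
  have hsy : s0 ≠ y := fun h => (hd.ne_of_mem hy hs) (h.symm)
  have hsy' : s0 ≠ y' := fun h => (hd.ne_of_mem hy' hs) (h.symm)
  refine key (o2Graph G v S₁ S₂) (some v) (some y) (some x1) (some y')
    none (some x2) (some x3) (some r0) (some s0)
    (o2_adj_S1 hy hyv) ((o2_adj_orig hx1v hyv hxy).symm)
    (o2_adj_orig hx1v hy'v hxy') (o2_adj_S1 hy' hy'v).symm
    (by simp [Ne.symm hx1v]) (by simp [hyy'])
    ⟨by simp, by simp, by simp, by simp⟩
    ⟨by simp [hx2v], by simp [hx2y], by simp [Ne.symm hx12], by simp [hx2y']⟩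
    ⟨by simp [hx3v], by simp [hx3y], by simp [Ne.symm hx13], by simp [hx3y']⟩
    ⟨by simp [hrv], by simp [hry], by simp [Ne.symm hx1r], by simp [hry']⟩
    ⟨by simp [hsv], by simp [hsy], by simp [Ne.symm hx1s], by simp [hsy']⟩
    (by simp) (by simp) (by simp [hx23]) (by simp [hrs])
    (o2_adj_S2 hr) (o2_adj_S2 hs)
    (o2_adj_orig hx2v hrv h2r) (o2_adj_orig hx2v hsv h2s)
    (o2_adj_orig hx3v hrv h3r) (o2_adj_orig hx3v hsv h3s)
    ⟨some v, Or.inl rfl, o2_adj_vv.symm⟩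
    ?_ ?_
  · rcases h2C with h | h
    · exact ⟨some y, Or.inr (Or.inl rfl), o2_adj_orig hx2v hyv h⟩
    · exact ⟨some y', Or.inr (Or.inr (Or.inr rfl)), o2_adj_orig hx2v hy'v h⟩
  · rcases h3C with h | h
    · exact ⟨some y, Or.inr (Or.inl rfl), o2_adj_orig hx3v hyv h⟩
    · exact ⟨some y', Or.inr (Or.inr (Or.inr rfl)), o2_adj_orig hx3v hy'v h⟩

end MainAux


section GraphFacts

private lemma k44_lr (k j : Fin 4) : K44.Adj (Sum.inl k) (Sum.inr j) := by
  simp [K44]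

private lemma k44_rl (k j : Fin 4) : K44.Adj (Sum.inr k) (Sum.inl j) :=
  (k44_lr j k).symm

private lemma k44_not_ll {k j : Fin 4} : ¬ K44.Adj (Sum.inl k) (Sum.inl j) := by
  simp [K44]

private lemma k44_not_rr {k j : Fin 4} : ¬ K44.Adj (Sum.inr k) (Sum.inr j) := by
  simp [K44]

private lemma k44m_lr {k j : Fin 4} (h : ¬(k = 0 ∧ j = 0)) :
    K44minus.Adj (Sum.inl k) (Sum.inr j) := by
  rw [K44minus, SimpleGraph.deleteEdges_adj]
  refine ⟨k44_lr k j, ?_⟩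
  simp only [Set.mem_singleton_iff, Sym2.eq_iff]
  rintro (⟨h1, h2⟩ | ⟨h1, h2⟩)
  · exact h ⟨Sum.inl.inj h1, Sum.inr.inj h2⟩
  · exact Sum.inl_ne_inr h1

private lemma k44m_rl {k j : Fin 4} (h : ¬(k = 0 ∧ j = 0)) :
    K44minus.Adj (Sum.inr k) (Sum.inl j) :=
  (k44m_lr (fun hc => h ⟨hc.2, hc.1⟩)).symm

private lemma k44m_le {u w : Fin 4 ⊕ Fin 4} (h : K44minus.Adj u w) : K44.Adj u w := by
  rw [K44minus, SimpleGraph.deleteEdges_adj] at h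
  exact h.1

private lemma k44m_not_ll {k j : Fin 4} : ¬ K44minus.Adj (Sum.inl k) (Sum.inl j) :=
  fun h => k44_not_ll (k44m_le h)

private lemma k44m_not_rr {k j : Fin 4} : ¬ K44minus.Adj (Sum.inr k) (Sum.inr j) :=
  fun h => k44_not_rr (k44m_le h)

private lemma k44m_lr_con {k j : Fin 4} (h : K44minus.Adj (Sum.inl k) (Sum.inr j)) :
    ¬(k = 0 ∧ j = 0) := by
  rintro ⟨rfl, rfl⟩
  rw [K44minus, SimpleGraph.deleteEdges_adj] at h
  exact h.2 rfl

private lemma k44m_rl_con {k j : Fin 4} (h : K44minus.Adj (Sum.inr k) (Sum.inl j)) :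
    ¬(k = 0 ∧ j = 0) :=
  fun hc => k44m_lr_con h.symm ⟨hc.2, hc.1⟩

private lemma ex3 : ∀ i : Fin 4, ∃ k l m : Fin 4,
    k ≠ i ∧ l ≠ i ∧ m ≠ i ∧ k ≠ l ∧ k ≠ m ∧ l ≠ m := by decide

private lemma ex2 : ∀ i : Fin 4, i ≠ 0 → ∃ l m : Fin 4,
    l ≠ 0 ∧ m ≠ 0 ∧ l ≠ i ∧ m ≠ i ∧ l ≠ m := by decide

private lemma no4 : ∀ a b c d : Fin 4, a ≠ 0 → b ≠ 0 → c ≠ 0 → d ≠ 0 →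
    a ≠ b → a ≠ c → a ≠ d → b ≠ c → b ≠ d → c ≠ d → False := by
  intro a b c d h1 h2 h3 h4 h5 h6 h7 h8 h9 h10
  rcases (by decide : ∀ a b c d : Fin 4, a = 0 ∨ b = 0 ∨ c = 0 ∨ d = 0 ∨ a = b ∨
    a = c ∨ a = d ∨ b = c ∨ b = d ∨ c = d) a b c d with
    h|h|h|h|h|h|h|h|h|h <;> simp_all

end GraphFacts

/-- Let `G` be `K₄,₄⁻` or `K₄,₄` and let `G_v` be obtained from `G` by
applying operation O2 to some vertex. Then some circle `X` of `G_v` satisfies: `G_v/X`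
has a `K₃,₃`-minor. -/
theorem statement_14 (G : SimpleGraph (Fin 4 ⊕ Fin 4)) (hG : G = K44minus ∨ G = K44)
    (v : Fin 4 ⊕ Fin 4) (S₁ S₂ : Set (Fin 4 ⊕ Fin 4)) (hO2 : IsO2Partition G v S₁ S₂) :
    ∃ X : Set (Sym2 (Option (Fin 4 ⊕ Fin 4))),
      IsGraphCircle (o2Graph G v S₁ S₂) X ∧
      HasGraphMinor (contractGraph (o2Graph G v S₁ S₂) X) K33 := by
  obtain ⟨h4, hUn, hdisj, h21, h22⟩ := hO2
  obtain ⟨y, hy, y', hy', hyy'⟩ := (Set.one_lt_ncard (Set.toFinite S₁)).1 (by omega)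
  obtain ⟨r0, hr, s0, hsm, hrs⟩ := (Set.one_lt_ncard (Set.toFinite S₂)).1 (by omega)
  have hS1 : S₁ ⊆ G.neighborSet v := by rw [← hUn]; exact Set.subset_union_left
  have hS2 : S₂ ⊆ G.neighborSet v := by rw [← hUn]; exact Set.subset_union_right
  have hAy : G.Adj v y := hS1 hy
  have hAy' : G.Adj v y' := hS1 hy'
  have hAr : G.Adj v r0 := hS2 hr
  have hAs : G.Adj v s0 := hS2 hsm
  rcases hG with rfl | rfl
  · -- K44minus
    rcases v with vi | vi
    · -- side
      rcases y with yi | yi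
      · exact absurd hAy k44m_not_ll
      rcases y' with yi' | yi'
      · exact absurd hAy' k44m_not_ll
      rcases r0 with ri | ri
      · exact absurd hAr k44m_not_ll
      rcases s0 with si | si
      · exact absurd hAs k44m_not_ll
      have cy := k44m_lr_con hAy
      have cy' := k44m_lr_con hAy'
      have cr := k44m_lr_con hAr
      have cs := k44m_lr_con hAs
      have iyy' : yi ≠ yi' := by simpa using hyy'
      have irs : ri ≠ si := by simpa using hrs
      have iyr : yi ≠ ri := by simpa using hdisj.ne_of_mem hy hr
      have iyr' : yi' ≠ ri := by simpa using hdisj.ne_of_mem hy' hr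
      have iys : yi ≠ si := by simpa using hdisj.ne_of_mem hy hsm
      have iys' : yi' ≠ si := by simpa using hdisj.ne_of_mem hy' hsm
      by_cases hv0 : vi = 0
      · subst hv0
        exact (no4 yi yi' ri si (fun h => cy ⟨rfl, h⟩) (fun h => cy' ⟨rfl, h⟩)
          (fun h => cr ⟨rfl, h⟩) (fun h => cs ⟨rfl, h⟩)
          iyy' iyr iys iyr' iys' irs).elim
      · by_cases h0 : ri = 0 ∨ si = 0
        · have hy0 : yi ≠ 0 := by rcases h0 with h | h; exacts [h ▸ iyr, h ▸ iys]
          have hy'0 : yi' ≠ 0 := by rcases h0 with h | h; exacts [h ▸ iyr', h ▸ iys']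
          obtain ⟨l, m, hl0, hm0, hli, hmi, hlm⟩ := ex2 vi hv0
          exact main_aux (Sum.inr yi) (Sum.inr yi') (Sum.inr ri) (Sum.inr si)
            (Sum.inl 0) (Sum.inl l) (Sum.inl m)
            hy hy' hr hsm hS1 hS2 hdisj hyy' hrs
            (by simp [Ne.symm hv0]) (by simp [hli]) (by simp [hmi])
            (by simp [Ne.symm hl0]) (by simp [Ne.symm hm0]) (by simp [hlm])
            (by simp) (by simp) (by simp) (by simp) (by simp) (by simp) (by simp) (by simp)
            (k44m_lr (fun h => hy0 h.2)) (k44m_lr (fun h => hy'0 h.2))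
            (k44m_lr (fun h => hl0 h.1)) (k44m_lr (fun h => hl0 h.1))
            (k44m_lr (fun h => hm0 h.1)) (k44m_lr (fun h => hm0 h.1))
            (Or.inl (k44m_lr (fun h => hl0 h.1))) (Or.inl (k44m_lr (fun h => hm0 h.1)))
        · push_neg at h0
          obtain ⟨hri0, hsi0⟩ := h0
          obtain ⟨l, m, hl0, hm0, hli, hmi, hlm⟩ := ex2 vi hv0
          refine main_aux (Sum.inr yi) (Sum.inr yi') (Sum.inr ri) (Sum.inr si)
            (Sum.inl l) (Sum.inl 0) (Sum.inl m)
            hy hy' hr hsm hS1 hS2 hdisj hyy' hrs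
            (by simp [hli]) (by simp [Ne.symm hv0]) (by simp [hmi])
            (by simp [hl0]) (by simp [hlm]) (by simp [Ne.symm hm0])
            (by simp) (by simp) (by simp) (by simp) (by simp) (by simp) (by simp) (by simp)
            (k44m_lr (fun h => hl0 h.1)) (k44m_lr (fun h => hl0 h.1))
            (k44m_lr (fun h => hri0 h.2)) (k44m_lr (fun h => hsi0 h.2))
            (k44m_lr (fun h => hm0 h.1)) (k44m_lr (fun h => hm0 h.1))
            ?_ (Or.inl (k44m_lr (fun h => hm0 h.1)))
          by_cases hyz : yi = 0
          · exact Or.inr (k44m_lr (fun h => (hyz ▸ iyy') h.2.symm))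
          · exact Or.inl (k44m_lr (fun h => hyz h.2))
    · -- side
      rcases y with yi | yi
      on_goal 2 => exact absurd hAy k44m_not_rr
      rcases y' with yi' | yi'
      on_goal 2 => exact absurd hAy' k44m_not_rr
      rcases r0 with ri | ri
      on_goal 2 => exact absurd hAr k44m_not_rr
      rcases s0 with si | si
      on_goal 2 => exact absurd hAs k44m_not_rr
      have cy := k44m_rl_con hAy
      have cy' := k44m_rl_con hAy'
      have cr := k44m_rl_con hAr
      have cs := k44m_rl_con hAs
      have iyy' : yi ≠ yi' := by simpa using hyy'
      have irs : ri ≠ si := by simpa using hrs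
      have iyr : yi ≠ ri := by simpa using hdisj.ne_of_mem hy hr
      have iyr' : yi' ≠ ri := by simpa using hdisj.ne_of_mem hy' hr
      have iys : yi ≠ si := by simpa using hdisj.ne_of_mem hy hsm
      have iys' : yi' ≠ si := by simpa using hdisj.ne_of_mem hy' hsm
      by_cases hv0 : vi = 0
      · subst hv0
        exact (no4 yi yi' ri si (fun h => cy ⟨rfl, h⟩) (fun h => cy' ⟨rfl, h⟩)
          (fun h => cr ⟨rfl, h⟩) (fun h => cs ⟨rfl, h⟩)
          iyy' iyr iys iyr' iys' irs).elim
      · by_cases h0 : ri = 0 ∨ si = 0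
        · have hy0 : yi ≠ 0 := by rcases h0 with h | h; exacts [h ▸ iyr, h ▸ iys]
          have hy'0 : yi' ≠ 0 := by rcases h0 with h | h; exacts [h ▸ iyr', h ▸ iys']
          obtain ⟨l, m, hl0, hm0, hli, hmi, hlm⟩ := ex2 vi hv0
          exact main_aux (Sum.inl yi) (Sum.inl yi') (Sum.inl ri) (Sum.inl si)
            (Sum.inr 0) (Sum.inr l) (Sum.inr m)
            hy hy' hr hsm hS1 hS2 hdisj hyy' hrs
            (by simp [Ne.symm hv0]) (by simp [hli]) (by simp [hmi])
            (by simp [Ne.symm hl0]) (by simp [Ne.symm hm0]) (by simp [hlm])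
            (by simp) (by simp) (by simp) (by simp) (by simp) (by simp) (by simp) (by simp)
            (k44m_rl (fun h => hy0 h.2)) (k44m_rl (fun h => hy'0 h.2))
            (k44m_rl (fun h => hl0 h.1)) (k44m_rl (fun h => hl0 h.1))
            (k44m_rl (fun h => hm0 h.1)) (k44m_rl (fun h => hm0 h.1))
            (Or.inl (k44m_rl (fun h => hl0 h.1))) (Or.inl (k44m_rl (fun h => hm0 h.1)))
        · push_neg at h0
          obtain ⟨hri0, hsi0⟩ := h0
          obtain ⟨l, m, hl0, hm0, hli, hmi, hlm⟩ := ex2 vi hv0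
          refine main_aux (Sum.inl yi) (Sum.inl yi') (Sum.inl ri) (Sum.inl si)
            (Sum.inr l) (Sum.inr 0) (Sum.inr m)
            hy hy' hr hsm hS1 hS2 hdisj hyy' hrs
            (by simp [hli]) (by simp [Ne.symm hv0]) (by simp [hmi])
            (by simp [hl0]) (by simp [hlm]) (by simp [Ne.symm hm0])
            (by simp) (by simp) (by simp) (by simp) (by simp) (by simp) (by simp) (by simp)
            (k44m_rl (fun h => hl0 h.1)) (k44m_rl (fun h => hl0 h.1))
            (k44m_rl (fun h => hri0 h.2)) (k44m_rl (fun h => hsi0 h.2))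
            (k44m_rl (fun h => hm0 h.1)) (k44m_rl (fun h => hm0 h.1))
            ?_ (Or.inl (k44m_rl (fun h => hm0 h.1)))
          by_cases hyz : yi = 0
          · exact Or.inr (k44m_rl (fun h => (hyz ▸ iyy') h.2.symm))
          · exact Or.inl (k44m_rl (fun h => hyz h.2))
  · -- K44
    rcases v with vi | vi
    · -- side
      rcases y with yi | yi
      · exact absurd hAy k44_not_ll
      rcases y' with yi' | yi'
      · exact absurd hAy' k44_not_ll
      rcases r0 with ri | ri
      · exact absurd hAr k44_not_ll
      rcases s0 with si | si
      · exact absurd hAs k44_not_ll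
      obtain ⟨k, l, m, hki, hli, hmi, hkl, hkm, hlm⟩ := ex3 vi
      exact main_aux (Sum.inr yi) (Sum.inr yi') (Sum.inr ri) (Sum.inr si)
        (Sum.inl k) (Sum.inl l) (Sum.inl m)
        hy hy' hr hsm hS1 hS2 hdisj hyy' hrs
        (by simp [hki]) (by simp [hli]) (by simp [hmi])
        (by simp [hkl]) (by simp [hkm]) (by simp [hlm])
        (by simp) (by simp) (by simp) (by simp) (by simp) (by simp) (by simp) (by simp)
        (k44_lr k yi) (k44_lr k yi') (k44_lr l ri) (k44_lr l si) (k44_lr m ri) (k44_lr m si)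
        (Or.inl (k44_lr l yi)) (Or.inl (k44_lr m yi))
    · -- side
      rcases y with yi | yi
      on_goal 2 => exact absurd hAy k44_not_rr
      rcases y' with yi' | yi'
      on_goal 2 => exact absurd hAy' k44_not_rr
      rcases r0 with ri | ri
      on_goal 2 => exact absurd hAr k44_not_rr
      rcases s0 with si | si
      on_goal 2 => exact absurd hAs k44_not_rr
      obtain ⟨k, l, m, hki, hli, hmi, hkl, hkm, hlm⟩ := ex3 vi
      exact main_aux (Sum.inl yi) (Sum.inl yi') (Sum.inl ri) (Sum.inl si)
        (Sum.inr k) (Sum.inr l) (Sum.inr m)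
        hy hy' hr hsm hS1 hS2 hdisj hyy' hrs
        (by simp [hki]) (by simp [hli]) (by simp [hmi])
        (by simp [hkl]) (by simp [hkm]) (by simp [hlm])
        (by simp) (by simp) (by simp) (by simp) (by simp) (by simp) (by simp) (by simp)
        (k44_rl k yi) (k44_rl k yi') (k44_rl l ri) (k44_rl l si) (k44_rl m ri) (k44_rl m si)
        (Or.inl (k44_rl l yi)) (Or.inl (k44_rl m yi))
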